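/- Let G be a finite group, R a commutative ring, and S a commutative R-algebra with G-action by R-algebra maps such that: (1) R → S^G is an isomorphism, (2) the canonical map S ⊗_R S → Map(G, S) (s ⊗ t ↦ (g ↦ s·g(t))) is an isomorphism, and (3) S is faithfully flat over R. Then for every R-module N, the natural map N → (S ⊗_R N)^G is an isomorphism. -/

import Mathlib

open scoped TensorProduct
open LinearMap

set_option linter.unusedSectionVars false

open scoped TensorProduct
open LinearMap

section Aux

variable (R S : Type*) [CommRing R] [CommRing S] [Algebra R S]
variable {G : Type*} [Group G] [Finite G] [MulSemiringAction G S] [SMulCommClass G R S]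
variable (N : Type*) [AddCommGroup N] [Module R N]

/-- the unit map `n ↦ 1 ⊗ n`. -/
noncomputable def unitMap : N →ₗ[R] S ⊗[R] N := TensorProduct.mk R S N 1

@[simp] lemma unitMap_apply (n : N) : unitMap R S N n = (1:S) ⊗ₜ[R] n := rfl

/-- multiplication twisted by `g`: `s ⊗ t ↦ s * g • t`. -/
noncomputable def mulTw (g : G) : S ⊗[R] S →ₗ[R] S :=
  (LinearMap.mul' R S).comp (lTensor S (DistribMulAction.toLinearMap R S g))

@[simp] lemma mulTw_tmul (g : G) (s t : S) : mulTw R S g (s ⊗ₜ[R] t) = s * g • t := rfl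

/-- `Θ_g : S ⊗ (S ⊗ N) → S ⊗ N`, `s ⊗ t ⊗ n ↦ (s * g•t) ⊗ n`. -/
noncomputable def theta (g : G) : S ⊗[R] (S ⊗[R] N) →ₗ[R] S ⊗[R] N :=
  (rTensor N (mulTw R S g)).comp (TensorProduct.assoc R S S N).symm.toLinearMap

@[simp] lemma theta_tmul (g : G) (s t : S) (n : N) :
    theta R S N g (s ⊗ₜ[R] (t ⊗ₜ[R] n)) = (s * g • t) ⊗ₜ[R] n := rfl

/-- the Amitsur-type differential `δ : S⊗N → S⊗(S⊗N)`, `s⊗n ↦ s⊗1⊗n − 1⊗s⊗n`. -/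
noncomputable def del : S ⊗[R] N →ₗ[R] S ⊗[R] (S ⊗[R] N) :=
  lTensor S (unitMap R S N) - TensorProduct.mk R S (S ⊗[R] N) 1

lemma del_tmul (s : S) (n : N) :
    del R S N (s ⊗ₜ[R] n) = s ⊗ₜ[R] ((1:S) ⊗ₜ[R] n) - (1:S) ⊗ₜ[R] (s ⊗ₜ[R] n) := rfl

lemma theta_comp_lTensor_unit (g : G) :
    (theta R S N g).comp (lTensor S (unitMap R S N)) = LinearMap.id := by
  ext s n
  simp

lemma theta_comp_del (g : G) :
    (theta R S N g).comp (del R S N) =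
      LinearMap.id - rTensor N (DistribMulAction.toLinearMap R S g) := by
  ext s n
  simp [del, mul_comm]
  rfl

lemma del_comp_unit : (del R S N).comp (unitMap R S N) = 0 := by
  ext n
  simp [del]

/-- contracting homotopy `H : S⊗(S⊗(S⊗N)) → S⊗(S⊗N)`, `s⊗t⊗y ↦ (s*t)⊗y`. -/
noncomputable def homot : S ⊗[R] (S ⊗[R] (S ⊗[R] N)) →ₗ[R] S ⊗[R] (S ⊗[R] N) :=
  (rTensor (S ⊗[R] N) (LinearMap.mul' R S)).comp
    (TensorProduct.assoc R S S (S ⊗[R] N)).symm.toLinearMap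

/-- plain contraction `p : S⊗(S⊗N) → S⊗N`, `s⊗t⊗n ↦ (s*t)⊗n`. -/
noncomputable def contr : S ⊗[R] (S ⊗[R] N) →ₗ[R] S ⊗[R] N :=
  (rTensor N (LinearMap.mul' R S)).comp (TensorProduct.assoc R S S N).symm.toLinearMap

lemma homot_comp_del :
    (homot R S N).comp (lTensor S (del R S N)) =
      (lTensor S (unitMap R S N)).comp (contr R S N) - LinearMap.id := by
  ext s t n
  have h : (lTensor S (del R S N)) (s ⊗ₜ[R] (t ⊗ₜ[R] n)) =
      s ⊗ₜ[R] (t ⊗ₜ[R] ((1:S) ⊗ₜ[R] n)) - s ⊗ₜ[R] ((1:S) ⊗ₜ[R] (t ⊗ₜ[R] n)) := by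
    simp only [lTensor_tmul, del, LinearMap.sub_apply, lTensor_tmul, unitMap_apply,
      TensorProduct.mk_apply, TensorProduct.tmul_sub]
  simp only [TensorProduct.AlgebraTensorModule.curry_apply, TensorProduct.curry_apply,
    LinearMap.coe_restrictScalars, LinearMap.coe_comp, Function.comp_apply, h, map_sub,
    LinearMap.sub_apply, LinearMap.id_coe, id_eq]
  simp [homot, contr, mul_comm]

-- base-changed exactness
lemma exact_lTensor : Function.Exact (lTensor S (unitMap R S N)) (lTensor S (del R S N)) := by
  intro y
  constructor
  · intro hy
    refine ⟨contr R S N y, ?_⟩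
    have h2 : (lTensor S (unitMap R S N)) ((contr R S N) y) - y = 0 := by
      have := congrArg (fun f => f y) (homot_comp_del R S N)
      simpa [hy] using this.symm
    exact sub_eq_zero.mp h2
  · rintro ⟨x, rfl⟩
    rw [← LinearMap.comp_apply, ← lTensor_comp, del_comp_unit, lTensor_zero, LinearMap.zero_apply]

end Aux

section Main

variable (R S : Type*) [CommRing R] [CommRing S] [Algebra R S]
variable {G : Type*} [Group G] [Finite G] [MulSemiringAction G S] [SMulCommClass G R S]
variable (N : Type*) [AddCommGroup N] [Module R N]

lemma contr_comp_lTensor_unit :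
    (contr R S N).comp (lTensor S (unitMap R S N)) = LinearMap.id := by
  ext s n
  simp [contr]

lemma theta_pi_injective (Φ : S ⊗[R] S →ₗ[R] (G → S))
    (hΦ : ∀ (s t : S) (g : G), Φ (s ⊗ₜ[R] t) g = s * g • t)
    (hbij : Function.Bijective Φ) :
    Function.Injective (LinearMap.pi (fun g : G => theta R S N g)) := by
  cases nonempty_fintype G
  haveI := Classical.decEq G
  let eΦ : (S ⊗[R] S) ≃ₗ[R] (G → S) := LinearEquiv.ofBijective Φ hbij
  let E : S ⊗[R] (S ⊗[R] N) ≃ₗ[R] (G → S ⊗[R] N) :=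
    (TensorProduct.assoc R S S N).symm ≪≫ₗ
      TensorProduct.congr eΦ (LinearEquiv.refl R N) ≪≫ₗ
      TensorProduct.comm R _ _ ≪≫ₗ
      TensorProduct.piRight R R N (fun _ : G => S) ≪≫ₗ
      LinearEquiv.piCongrRight (fun _ : G => TensorProduct.comm R N S)
  have hE : (LinearMap.pi (fun g : G => theta R S N g) :
      S ⊗[R] (S ⊗[R] N) →ₗ[R] (G → S ⊗[R] N)) = E.toLinearMap := by
    ext s t n
    simp [E, eΦ, hΦ, TensorProduct.piRight, TensorProduct.piRightHom_tmul,
      LinearEquiv.ofBijective_apply]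
  rw [hE]
  exact E.injective

lemma exact_unit_del (h3 : Module.FaithfullyFlat R S) :
    Function.Exact (unitMap R S N) (del R S N) :=
  Module.FaithfullyFlat.lTensor_reflects_exact R S _ _ (exact_lTensor R S N)

lemma unit_injective (h3 : Module.FaithfullyFlat R S) :
    Function.Injective (unitMap R S N) := by
  have hinj : Function.Injective (lTensor S (unitMap R S N)) := by
    intro x y hxy
    have := congrArg (contr R S N) hxy
    have h1 := congrArg (fun f => f x) (contr_comp_lTensor_unit R S N)
    have h2 := congrArg (fun f => f y) (contr_comp_lTensor_unit R S N)
    simp only [LinearMap.comp_apply, LinearMap.id_apply] at h1 h2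
    rw [← h1, ← h2]
    exact this
  have hex : Function.Exact ((0 : R →ₗ[R] N).lTensor S) ((unitMap R S N).lTensor S) := by
    rw [lTensor_zero]
    intro y
    constructor
    · intro hy
      refine ⟨0, ?_⟩
      have : (unitMap R S N).lTensor S y = (unitMap R S N).lTensor S 0 := by simpa using hy
      simpa using (hinj this).symm
    · rintro ⟨x, rfl⟩
      simp
  have hex' := Module.FaithfullyFlat.lTensor_reflects_exact R S _ _ hex
  intro a b hab
  have h0 : unitMap R S N (a - b) = 0 := by rw [map_sub, hab, sub_self]
  obtain ⟨r, hr⟩ := (hex' (a - b)).mp h0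
  have : a - b = 0 := by simpa using hr.symm
  exact sub_eq_zero.mp this

end Main

/-- Let `G` be a finite group acting on a commutative `R`-algebra `S` by `R`-algebra maps,
such that `R ≅ S^G`, the canonical map `S ⊗[R] S → Map(G, S)`, `s ⊗ t ↦ (g ↦ s * g • t)`,
is bijective, and `S` is faithfully flat over `R`.  Then for every `R`-module `N` the
natural map `N → (S ⊗[R] N)^G`, `n ↦ 1 ⊗ n`, is a bijection onto the `G`-fixed elements,
where `G` acts on `S ⊗[R] N` through its action on `S`. -/
theorem stmt15 {R S : Type*} [CommRing R] [CommRing S] [Algebra R S]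
    (G : Type*) [Group G] [Finite G] [MulSemiringAction G S] [SMulCommClass G R S]
    (h1 : ∀ s : S, (∀ g : G, g • s = s) ↔ ∃ r : R, algebraMap R S r = s)
    (h1' : Function.Injective (algebraMap R S))
    (h2 : ∃ Φ : S ⊗[R] S →ₗ[R] (G → S),
      (∀ (s t : S) (g : G), Φ (s ⊗ₜ[R] t) g = s * g • t) ∧ Function.Bijective Φ)
    (h3 : Module.FaithfullyFlat R S) :
    ∀ (N : Type*) [AddCommGroup N] [Module R N],
      Function.Injective (fun n : N => ((1 : S) ⊗ₜ[R] n : S ⊗[R] N)) ∧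
      ∀ x : S ⊗[R] N,
        (∀ g : G, LinearMap.rTensor N (DistribMulAction.toLinearMap R S g) x = x) ↔
          ∃ n : N, (1 : S) ⊗ₜ[R] n = x := by
  obtain ⟨Φ, hΦ, hbij⟩ := h2
  intro N _ _
  constructor
  · exact fun a b hab => unit_injective R S N h3 hab
  · intro x
    constructor
    · intro hx
      have hδ : del R S N x = 0 := by
        apply theta_pi_injective R S N Φ hΦ hbij
        funext g
        have h := congrArg (fun f => f x) (theta_comp_del R S N g)
        simp only [LinearMap.comp_apply, LinearMap.sub_apply, LinearMap.id_apply] at h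
        simp only [LinearMap.pi_apply, h, hx g, sub_self, map_zero, Pi.zero_apply]
      obtain ⟨n, hn⟩ := (exact_unit_del R S N h3 x).mp hδ
      exact ⟨n, hn⟩
    · rintro ⟨n, rfl⟩ g
      simp [smul_one]
      change (g • (1:S)) ⊗ₜ[R] n = _
      rw [smul_one]
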